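/- Let μ ≥ 0, L > 0, let h : V → ℝ be convex, differentiable with L-Lipschitz gradient, let g : V → ℝ be convex, and set f = h + g; assume f is μ-convex in the subgradient sense and has global minimizer x*. Let γ₀ > 0, x₀, v₀ ∈ V, and suppose sequences (x_k, v_k, γ_k) and (p_{k+1}) satisfy: α_k = √(γ_k/(4L)), β_k = 1/(2Lα_k), p_{k+1} is a subgradient of g at x_{k+1}, (x_{k+1} - x_k)/α_k = v_k - x_{k+1} - β_k(∇h(x_k) + p_{k+1}), (v_{k+1} - v_k)/α_k = (μ/γ_k)(x_{k+1} - v_{k+1}) - (1/γ_k)(∇h(x_{k+1}) + p_{k+1}), (γ_{k+1} - γ_k)/α_k = μ - γ_{k+1}. Define λ₀ = 1, λ_k = ∏_{i=0}^{k-1} 1/(1+α_i), L_k = f(x_k) - f(x*) + (γ_k/2)‖v_k - x*‖², and q_{k+1} = ∇h(x_{k+1}) + p_{k+1}. Then for every k ≥ 0, L_k + (1/(4L))·∑_{i=0}^{k-1} (λ_k/λ_i)‖q_{i+1}‖² ≤ λ_k·L₀. -/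

import Mathlib

open scoped RealInnerProductSpace
open InnerProductSpace

section AuxHNAG

variable {V : Type*} [NormedAddCommGroup V] [InnerProductSpace ℝ V] [CompleteSpace V]

lemma line_hasDerivAt (h : V → ℝ) (h' : V → V) (hdiff : ∀ z, HasGradientAt h (h' z) z)
    (x d : V) (t : ℝ) :
    HasDerivAt (fun s : ℝ => h (x + s • d)) ⟪h' (x + t • d), d⟫ t := by
  have hline : HasDerivAt (fun s : ℝ => x + s • d) d t := by
    simpa using ((hasDerivAt_id t).smul_const d).const_add x
  have := ((hdiff (x + t • d)).hasFDerivAt).comp_hasDerivAt t hline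
  exact this

lemma gradient_ineq (h : V → ℝ) (h' : V → V) (hconv : ConvexOn ℝ Set.univ h)
    (hdiff : ∀ z, HasGradientAt h (h' z) z) (z u : V) :
    h z + ⟪h' z, u - z⟫ ≤ h u := by
  have hψ : ConvexOn ℝ Set.univ fun t : ℝ => h (z + t • (u - z)) := by
    have h2 := hconv.comp_affineMap (AffineMap.lineMap z u)
    have heq : (h ∘ (AffineMap.lineMap z u) : ℝ → ℝ) = fun t : ℝ => h (z + t • (u - z)) := by
      funext t
      show h _ = h _
      congr 1
      simp [AffineMap.lineMap_apply_module]
      module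
    rw [heq] at h2
    simpa using h2
  have hs := hψ.le_slope_of_hasDerivAt (Set.mem_univ (0:ℝ)) (Set.mem_univ (1:ℝ)) zero_lt_one
    (line_hasDerivAt h h' hdiff z (u - z) 0)
  rw [slope_def_field] at hs
  simp at hs
  linarith [hs]

lemma descent_lemma (h : V → ℝ) (h' : V → V) (L : ℝ) (hL : 0 < L)
    (hdiff : ∀ z, HasGradientAt h (h' z) z)
    (hlip : ∀ z w, ‖h' z - h' w‖ ≤ L * ‖z - w‖) (x y : V) :
    h y ≤ h x + ⟪h' x, y - x⟫ + L / 2 * ‖y - x‖ ^ 2 := by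
  set d := y - x with hd
  have hcont : Continuous fun t : ℝ => ⟪h' (x + t • d), d⟫ := by
    have hlipW : LipschitzWith (Real.toNNReal L) h' := by
      apply LipschitzWith.of_dist_le_mul
      intro a b
      rw [dist_eq_norm, dist_eq_norm]
      calc ‖h' a - h' b‖ ≤ L * ‖a - b‖ := hlip a b
        _ = (Real.toNNReal L) * ‖a - b‖ := by rw [Real.coe_toNNReal _ hL.le]
    exact Continuous.inner (hlipW.continuous.comp (by continuity)) continuous_const
  have hftc : (∫ t in (0:ℝ)..1, ⟪h' (x + t • d), d⟫)
      = h (x + (1:ℝ) • d) - h (x + (0:ℝ) • d) := by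
    exact intervalIntegral.integral_eq_sub_of_hasDerivAt (f := fun s : ℝ => h (x + s • d))
      (fun t _ => line_hasDerivAt h h' hdiff x d t) (hcont.intervalIntegrable 0 1)
  have hmono : (∫ t in (0:ℝ)..1, ⟪h' (x + t • d), d⟫)
      ≤ ∫ t in (0:ℝ)..1, (⟪h' x, d⟫ + t * (L * ‖d‖ ^ 2)) := by
    apply intervalIntegral.integral_mono_on zero_le_one (hcont.intervalIntegrable 0 1)
      ((by continuity : Continuous fun t : ℝ => ⟪h' x, d⟫ + t * (L * ‖d‖ ^ 2)).intervalIntegrable 0 1)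
    intro t ht
    have h1 : ⟪h' (x + t • d) - h' x, d⟫ ≤ ‖h' (x + t • d) - h' x‖ * ‖d‖ :=
      real_inner_le_norm _ _
    have h2 : ‖h' (x + t • d) - h' x‖ ≤ L * (t * ‖d‖) := by
      have := hlip (x + t • d) x
      simpa [add_sub_cancel_left, norm_smul, abs_of_nonneg ht.1, mul_assoc] using this
    rw [inner_sub_left] at h1
    have h3 := mul_le_mul_of_nonneg_right h2 (norm_nonneg d)
    nlinarith [h1, h3]
  have hval : (∫ t in (0:ℝ)..1, (⟪h' x, d⟫ + t * (L * ‖d‖ ^ 2)))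
      = ⟪h' x, d⟫ + L / 2 * ‖d‖ ^ 2 := by
    rw [intervalIntegral.integral_add (intervalIntegrable_const)
      ((by continuity : Continuous fun t : ℝ => t * (L * ‖d‖ ^ 2)).intervalIntegrable 0 1)]
    rw [intervalIntegral.integral_mul_const, integral_id]
    simp
    ring
  have h0 : x + (0:ℝ) • d = x := by simp
  have h1 : x + (1:ℝ) • d = y := by simp [hd]
  rw [h0, h1] at hftc
  linarith [hftc ▸ hmono, hval ▸ hmono]

lemma coco (h : V → ℝ) (h' : V → V) (L : ℝ) (hL : 0 < L)
    (hconv : ConvexOn ℝ Set.univ h)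
    (hdiff : ∀ z, HasGradientAt h (h' z) z)
    (hlip : ∀ z w, ‖h' z - h' w‖ ≤ L * ‖z - w‖) (z w : V) :
    1 / (2 * L) * ‖h' w - h' z‖ ^ 2 ≤ h w - h z - ⟪h' z, w - z⟫ := by
  set φ : V → ℝ := fun u => h u - ⟪h' z, u⟫ with hφ
  set φ' : V → V := fun u => h' u - h' z with hφ'
  have hφdiff : ∀ u, HasGradientAt φ (φ' u) u := by
    intro u
    have hl : HasFDerivAt (fun u : V => ⟪h' z, u⟫) (InnerProductSpace.toDual ℝ V (h' z)) u := by
      exact (InnerProductSpace.toDual ℝ V (h' z)).hasFDerivAt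
    have := ((hdiff u).hasFDerivAt).sub hl
    rw [hasGradientAt_iff_hasFDerivAt, hφ']
    simp only [map_sub]
    exact this
  have hφlip : ∀ a b, ‖φ' a - φ' b‖ ≤ L * ‖a - b‖ := by
    intro a b
    simpa [hφ', sub_sub_sub_cancel_right] using hlip a b
  have hGlo : ∀ u, φ z ≤ φ u := by
    intro u
    have := gradient_ineq h h' hconv hdiff z u
    have hsplit : ⟪h' z, u - z⟫ = ⟪h' z, u⟫ - ⟪h' z, z⟫ := inner_sub_right _ _ _
    simp only [hφ]
    linarith
  have h2 := descent_lemma φ φ' L hL hφdiff hφlip w (w - (1 / L) • φ' w)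
  have hv : w - (1 / L) • φ' w - w = -((1 / L) • φ' w) := by abel
  rw [hv] at h2
  have hi : ⟪φ' w, -((1 / L) • φ' w)⟫ = -(1 / L * ‖φ' w‖ ^ 2) := by
    rw [inner_neg_right, real_inner_smul_right, real_inner_self_eq_norm_sq]
  have hn : ‖-((1 / L) • φ' w)‖ ^ 2 = (1 / L) ^ 2 * ‖φ' w‖ ^ 2 := by
    rw [norm_neg, norm_smul]
    simp [abs_of_pos hL]
    ring
  rw [hi, hn] at h2
  have h3 := hGlo (w - (1 / L) • φ' w)
  have hsplit : ⟪h' z, w - z⟫ = ⟪h' z, w⟫ - ⟪h' z, z⟫ := inner_sub_right _ _ _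
  have hφz : φ z = h z - ⟪h' z, z⟫ := rfl
  have hφw : φ w = h w - ⟪h' z, w⟫ := rfl
  have hLL : L / 2 * ((1 / L) ^ 2 * ‖φ' w‖ ^ 2) = 1 / (2 * L) * ‖φ' w‖ ^ 2 := by
    field_simp
  rw [hLL] at h2
  have hee : ‖φ' w‖ = ‖h' w - h' z‖ := rfl
  rw [hee] at h2
  have h4 : 1 / L * ‖h' w - h' z‖ ^ 2 = 2 * (1 / (2 * L) * ‖h' w - h' z‖ ^ 2) := by
    field_simp
  linarith [h2, h3, hsplit, hφz, hφw, h4]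

end AuxHNAG

set_option maxHeartbeats 1000000 in
/-- Convergence with subgradient control for the splitting HNAG scheme with the
alternative parameters `α_k = √(γ_k/(4L))`, `β_k = 1/(2Lα_k)` (Remark 5.1):
`L_k + (1/(4L))∑_{i<k} (λ_k/λ_i)‖q_{i+1}‖² ≤ λ_k L₀`, where
`q_{i+1} = ∇h(x_{i+1}) + p_{i+1}`. -/
theorem splitting_hnag_subgradient_control
    {V : Type*} [NormedAddCommGroup V] [InnerProductSpace ℝ V] [CompleteSpace V]
    (μ L : ℝ) (hμ : 0 ≤ μ) (hL : 0 < L)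
    (h g f : V → ℝ) (h' : V → V)
    (hconvh : ConvexOn ℝ Set.univ h)
    (hdiffh : ∀ z, HasGradientAt h (h' z) z)
    (hlip : ∀ z w : V, ‖h' z - h' w‖ ≤ L * ‖z - w‖)
    (hconvg : ConvexOn ℝ Set.univ g)
    (hf : ∀ z, f z = h z + g z)
    (hfconv : ∀ z w q : V, (∀ u, f u ≥ f w + ⟪q, u - w⟫) →
      f z - f w - ⟪q, z - w⟫ ≥ μ / 2 * ‖z - w‖ ^ 2)
    (xstar : V) (hmin : ∀ z, f xstar ≤ f z)
    (x v p : ℕ → V) (γ α β lam : ℕ → ℝ) (hγ0 : 0 < γ 0)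
    (hαdef : ∀ k, α k = Real.sqrt (γ k / (4 * L)))
    (hβ : ∀ k, β k = 1 / (2 * L * α k))
    (hp : ∀ k, ∀ u, g u ≥ g (x (k + 1)) + ⟪p (k + 1), u - x (k + 1)⟫)
    (h1 : ∀ k, (α k)⁻¹ • (x (k + 1) - x k)
        = v k - x (k + 1) - β k • (h' (x k) + p (k + 1)))
    (h2 : ∀ k, (α k)⁻¹ • (v (k + 1) - v k)
        = (μ / γ k) • (x (k + 1) - v (k + 1))
          - (1 / γ k) • (h' (x (k + 1)) + p (k + 1)))
    (h3 : ∀ k, (γ (k + 1) - γ k) / α k = μ - γ (k + 1))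
    (hlam : ∀ k, lam k = ∏ i ∈ Finset.range k, (1 + α i)⁻¹)
    (k : ℕ) :
    (f (x k) - f xstar + γ k / 2 * ‖v k - xstar‖ ^ 2)
        + 1 / (4 * L) * ∑ i ∈ Finset.range k,
            (lam k / lam i) * ‖h' (x (i + 1)) + p (i + 1)‖ ^ 2
      ≤ lam k * (f (x 0) - f xstar + γ 0 / 2 * ‖v 0 - xstar‖ ^ 2) := by
  have hαnn : ∀ i, 0 ≤ α i := fun i => (hαdef i) ▸ Real.sqrt_nonneg _
  have hγpos : ∀ n, 0 < γ n := by
    intro n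
    induction n with
    | zero => exact hγ0
    | succ m ih =>
      have hαm : 0 < α m := by
        rw [hαdef m]
        exact Real.sqrt_pos.mpr (div_pos ih (by positivity))
      have e3 := h3 m
      rw [div_eq_iff hαm.ne'] at e3
      nlinarith [e3, mul_nonneg (hαnn m) hμ, ih, hαm]
  have hαpos : ∀ n, 0 < α n := fun n => by
    rw [hαdef n]
    exact Real.sqrt_pos.mpr (div_pos (hγpos n) (by positivity))
  -- the one-step Lyapunov inequality
  have key : ∀ n : ℕ,
      (1 + α n) * (f (x (n + 1)) - f xstar + γ (n + 1) / 2 * ‖v (n + 1) - xstar‖ ^ 2)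
        + 1 / (4 * L) * ‖h' (x (n + 1)) + p (n + 1)‖ ^ 2
      ≤ f (x n) - f xstar + γ n / 2 * ‖v n - xstar‖ ^ 2 := by
    intro n
    have hap : 0 < α n := hαpos n
    have hcp : 0 < γ n := hγpos n
    have hab : α n * β n = 1 / (2 * L) := by
      rw [hβ n]
      field_simp
    have ha2 : α n ^ 2 = γ n / (4 * L) := by
      rw [hαdef n]
      exact Real.sq_sqrt (div_nonneg (hγpos n).le (by positivity))
    -- vector equations
    have e1 : x (n + 1) - x n = α n • (v n - x (n + 1) - β n • (h' (x n) + p (n + 1))) := by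
      rw [← h1 n, smul_smul, mul_inv_cancel₀ hap.ne', one_smul]
    have e2 : v (n + 1) - v n
        = α n • ((μ / γ n) • (x (n + 1) - v (n + 1))
            - (1 / γ n) • (h' (x (n + 1)) + p (n + 1))) := by
      rw [← h2 n, smul_smul, mul_inv_cancel₀ hap.ne', one_smul]
    -- (F1) cocoercivity-based bound
    have hcoco := coco h h' L hL hconvh hdiffh hlip (x (n + 1)) (x n)
    have hgX := hp n (x n)
    have hiadd1 : ⟪h' (x (n + 1)) + p (n + 1), x n - x (n + 1)⟫
        = ⟪h' (x (n + 1)), x n - x (n + 1)⟫ + ⟪p (n + 1), x n - x (n + 1)⟫ :=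
      inner_add_left _ _ _
    have F1 : 1 / (2 * L) * ‖h' (x n) - h' (x (n + 1))‖ ^ 2
        ≤ f (x n) - f (x (n + 1)) - ⟪h' (x (n + 1)) + p (n + 1), x n - x (n + 1)⟫ := by
      rw [hf (x n), hf (x (n + 1))]
      linarith [hcoco, hgX, hiadd1]
    have cv1 : ⟪h' (x (n + 1)) + p (n + 1), x n - x (n + 1)⟫
        = ⟪h' (x (n + 1)) + p (n + 1), x n⟫ - ⟪h' (x (n + 1)) + p (n + 1), x (n + 1)⟫ :=
      inner_sub_right _ _ _
    -- (F2) strong-convexity bound at the minimizer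
    have hsub : ∀ u, f u ≥ f (x (n + 1)) + ⟪h' (x (n + 1)) + p (n + 1), u - x (n + 1)⟫ := by
      intro u
      have hh := gradient_ineq h h' hconvh hdiffh (x (n + 1)) u
      have hgu := hp n u
      have hq : ⟪h' (x (n + 1)) + p (n + 1), u - x (n + 1)⟫
          = ⟪h' (x (n + 1)), u - x (n + 1)⟫ + ⟪p (n + 1), u - x (n + 1)⟫ :=
        inner_add_left _ _ _
      rw [hf u, hf (x (n + 1))]
      linarith [hh, hgu, hq]
    have F2 := hfconv xstar (x (n + 1)) (h' (x (n + 1)) + p (n + 1)) hsub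
    have F2a := mul_le_mul_of_nonneg_left F2 hap.le
    have cv2 : α n * ⟪h' (x (n + 1)) + p (n + 1), xstar - x (n + 1)⟫
        = α n * ⟪h' (x (n + 1)) + p (n + 1), xstar⟫
          - α n * ⟪h' (x (n + 1)) + p (n + 1), x (n + 1)⟫ := by
      rw [inner_sub_right]
      ring
    -- Young's inequality term
    have yexp : ‖γ n • (v (n + 1) - v n) + α n • (h' (x (n + 1)) + p (n + 1))‖ ^ 2
        = γ n ^ 2 * ‖v (n + 1) - v n‖ ^ 2
          + 2 * (γ n * α n) * (⟪h' (x (n + 1)) + p (n + 1), v (n + 1)⟫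
              - ⟪h' (x (n + 1)) + p (n + 1), v n⟫)
          + α n ^ 2 * ‖h' (x (n + 1)) + p (n + 1)‖ ^ 2 := by
      rw [norm_add_sq_real, real_inner_smul_left, real_inner_smul_right, real_inner_comm,
        inner_sub_right]
      simp only [norm_smul, Real.norm_eq_abs, abs_of_pos hcp, abs_of_pos hap]
      ring
    have young2 : α n * (⟪h' (x (n + 1)) + p (n + 1), v n⟫
          - ⟪h' (x (n + 1)) + p (n + 1), v (n + 1)⟫)
        ≤ γ n / 2 * ‖v (n + 1) - v n‖ ^ 2
          + 1 / (8 * L) * ‖h' (x (n + 1)) + p (n + 1)‖ ^ 2 := by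
      have hsq : (0:ℝ) ≤ ‖γ n • (v (n + 1) - v n) + α n • (h' (x (n + 1)) + p (n + 1))‖ ^ 2 :=
        sq_nonneg _
      rw [yexp, ha2] at hsq
      have key1 : (2 * γ n) * (γ n / 2 * ‖v (n + 1) - v n‖ ^ 2
            + 1 / (8 * L) * ‖h' (x (n + 1)) + p (n + 1)‖ ^ 2
            - α n * (⟪h' (x (n + 1)) + p (n + 1), v n⟫
                - ⟪h' (x (n + 1)) + p (n + 1), v (n + 1)⟫))
          = γ n ^ 2 * ‖v (n + 1) - v n‖ ^ 2
            + 2 * (γ n * α n) * (⟪h' (x (n + 1)) + p (n + 1), v (n + 1)⟫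
                - ⟪h' (x (n + 1)) + p (n + 1), v n⟫)
            + (γ n / (4 * L)) * ‖h' (x (n + 1)) + p (n + 1)‖ ^ 2 := by
        field_simp
        ring
      have key2 : (2 * γ n) * (0:ℝ) ≤ (2 * γ n) * (γ n / 2 * ‖v (n + 1) - v n‖ ^ 2
            + 1 / (8 * L) * ‖h' (x (n + 1)) + p (n + 1)‖ ^ 2
            - α n * (⟪h' (x (n + 1)) + p (n + 1), v n⟫
                - ⟪h' (x (n + 1)) + p (n + 1), v (n + 1)⟫)) := by
        rw [key1, mul_zero]
        linarith [hsq]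
      have := le_of_mul_le_mul_left key2 (by positivity : (0:ℝ) < 2 * γ n)
      linarith [this]
    -- (i) scalar recursion for γ
    have e3 := h3 n
    rw [div_eq_iff hap.ne'] at e3
    have i1 : (1 + α n) * γ (n + 1) = γ n + α n * μ := by linear_combination e3
    -- (ii) norm difference identity
    have ii : ‖v (n + 1) - xstar‖ ^ 2 - ‖v n - xstar‖ ^ 2
        = 2 * ⟪v (n + 1) - v n, v (n + 1) - xstar⟫ - ‖v (n + 1) - v n‖ ^ 2 := by
      have h0 : ‖v n - xstar‖ ^ 2 = ‖(v (n + 1) - xstar) - (v (n + 1) - v n)‖ ^ 2 := by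
        rw [show v n - xstar = (v (n + 1) - xstar) - (v (n + 1) - v n) by abel]
      have he := norm_sub_sq_real (v (n + 1) - xstar) (v (n + 1) - v n)
      have hcomm : ⟪v (n + 1) - xstar, v (n + 1) - v n⟫
          = ⟪v (n + 1) - v n, v (n + 1) - xstar⟫ := real_inner_comm _ _
      linarith [h0, he, hcomm]
    -- (iii) inner product of e2 with v(n+1) - xstar
    have iii : γ n * ⟪v (n + 1) - v n, v (n + 1) - xstar⟫
        = α n * μ * ⟪x (n + 1) - v (n + 1), v (n + 1) - xstar⟫
          - α n * ⟪h' (x (n + 1)) + p (n + 1), v (n + 1) - xstar⟫ := by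
      rw [e2, real_inner_smul_left, inner_sub_left, real_inner_smul_left, real_inner_smul_left]
      field_simp
    -- (iv) three-point identity
    have iv : 2 * ⟪x (n + 1) - v (n + 1), v (n + 1) - xstar⟫
        = ‖xstar - x (n + 1)‖ ^ 2 - ‖x (n + 1) - v (n + 1)‖ ^ 2
          - ‖v (n + 1) - xstar‖ ^ 2 := by
      have h0 : x (n + 1) - xstar = (x (n + 1) - v (n + 1)) + (v (n + 1) - xstar) := by abel
      rw [show ‖xstar - x (n + 1)‖ = ‖x (n + 1) - xstar‖ from norm_sub_rev _ _, h0,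
        norm_add_sq_real]
      ring
    have F4 : (1 + α n) * (γ (n + 1) / 2) * ‖v (n + 1) - xstar‖ ^ 2
          - γ n / 2 * ‖v n - xstar‖ ^ 2
        = α n * μ / 2 * ‖xstar - x (n + 1)‖ ^ 2
          - α n * μ / 2 * ‖x (n + 1) - v (n + 1)‖ ^ 2
          - α n * ⟪h' (x (n + 1)) + p (n + 1), v (n + 1) - xstar⟫
          - γ n / 2 * ‖v (n + 1) - v n‖ ^ 2 := by
      linear_combination (‖v (n + 1) - xstar‖ ^ 2 / 2) * i1 + (γ n / 2) * ii + iii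
        + (α n * μ / 2) * iv
    have cv3 : α n * ⟪h' (x (n + 1)) + p (n + 1), v (n + 1) - xstar⟫
        = α n * ⟪h' (x (n + 1)) + p (n + 1), v (n + 1)⟫
          - α n * ⟪h' (x (n + 1)) + p (n + 1), xstar⟫ := by
      rw [inner_sub_right]
      ring
    -- (F5) inner product of e1 with q
    have F5raw := congrArg (fun u : V => ⟪h' (x (n + 1)) + p (n + 1), u⟫) e1
    simp only [inner_sub_right, real_inner_smul_right] at F5raw
    have F6 : ⟪h' (x (n + 1)) + p (n + 1), h' (x n) + p (n + 1)⟫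
        = ‖h' (x (n + 1)) + p (n + 1)‖ ^ 2
          + ⟪h' (x (n + 1)) + p (n + 1), h' (x n) - h' (x (n + 1))⟫ := by
      have hQp : h' (x n) + p (n + 1)
          = (h' (x (n + 1)) + p (n + 1)) + (h' (x n) - h' (x (n + 1))) := by abel
      rw [hQp, inner_add_right, real_inner_self_eq_norm_sq]
    have F5 : ⟪h' (x (n + 1)) + p (n + 1), x (n + 1)⟫ - ⟪h' (x (n + 1)) + p (n + 1), x n⟫
        = α n * (⟪h' (x (n + 1)) + p (n + 1), v n⟫ - ⟪h' (x (n + 1)) + p (n + 1), x (n + 1)⟫)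
          - 1 / (2 * L) * (‖h' (x (n + 1)) + p (n + 1)‖ ^ 2
            + ⟪h' (x (n + 1)) + p (n + 1), h' (x n) - h' (x (n + 1))⟫) := by
      linear_combination F5raw
        - (‖h' (x (n + 1)) + p (n + 1)‖ ^ 2
            + ⟪h' (x (n + 1)) + p (n + 1), h' (x n) - h' (x (n + 1))⟫) * hab
        - (α n * β n) * F6
    -- dropped nonnegative term
    have hdropq : 0 ≤ α n * μ * ‖x (n + 1) - v (n + 1)‖ ^ 2 :=
      mul_nonneg (mul_nonneg hap.le hμ) (sq_nonneg _)
    -- sum of squares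
    have F7 : 0 ≤ ‖h' (x (n + 1)) + p (n + 1)‖ ^ 2
        + 4 * ⟪h' (x (n + 1)) + p (n + 1), h' (x n) - h' (x (n + 1))⟫
        + 4 * ‖h' (x n) - h' (x (n + 1))‖ ^ 2 := by
      have h0 : (0:ℝ) ≤ ‖(h' (x (n + 1)) + p (n + 1)) + (2:ℝ) • (h' (x n) - h' (x (n + 1)))‖ ^ 2 :=
        sq_nonneg _
      rw [norm_add_sq_real, real_inner_smul_right, norm_smul] at h0
      simp only [Real.norm_eq_abs, abs_two] at h0
      nlinarith [h0]
    have F7' : 0 ≤ 1 / (8 * L) * (‖h' (x (n + 1)) + p (n + 1)‖ ^ 2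
        + 4 * ⟪h' (x (n + 1)) + p (n + 1), h' (x n) - h' (x (n + 1))⟫
        + 4 * ‖h' (x n) - h' (x (n + 1))‖ ^ 2) :=
      mul_nonneg (by positivity) F7
    have c1q : 1 / (2 * L) * ‖h' (x (n + 1)) + p (n + 1)‖ ^ 2 = 2 * (1 / (4 * L) * ‖h' (x (n + 1)) + p (n + 1)‖ ^ 2) := by field_simp; ring
    have c2q : 2 * (1 / (8 * L) * ‖h' (x (n + 1)) + p (n + 1)‖ ^ 2) = 1 / (4 * L) * ‖h' (x (n + 1)) + p (n + 1)‖ ^ 2 := by field_simp; ring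
    have c1r : 1 / (2 * L) * ‖h' (x n) - h' (x (n + 1))‖ ^ 2 = 4 * (1 / (8 * L) * ‖h' (x n) - h' (x (n + 1))‖ ^ 2) := by field_simp; ring
    have c1i : 1 / (2 * L) * (⟪h' (x (n + 1)) + p (n + 1), h' (x n) - h' (x (n + 1))⟫) = 4 * (1 / (8 * L) * (⟪h' (x (n + 1)) + p (n + 1), h' (x n) - h' (x (n + 1))⟫)) := by field_simp; ring
    linarith [F1, cv1, F2a, cv2, young2, F4, cv3, F5, hdropq, F7', c1q, c2q, c1r, c1i]
  -- the induction
  have hlam0 : lam 0 = 1 := by rw [hlam]; simp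
  have hlampos : ∀ n, 0 < lam n := by
    intro n
    rw [hlam]
    apply Finset.prod_pos
    intro i _
    have := hαnn i
    exact inv_pos.mpr (by linarith)
  induction k with
  | zero =>
    rw [hlam0]
    simp
  | succ n ih =>
    have hsucc : lam (n + 1) = lam n * (1 + α n)⁻¹ := by
      rw [hlam, hlam, Finset.prod_range_succ]
    have h1a : 0 < 1 + α n := by linarith [hαnn n]
    have htpos : 0 < (1 + α n)⁻¹ := inv_pos.mpr h1a
    have ht1 : (1 + α n)⁻¹ * (1 + α n) = 1 := inv_mul_cancel₀ h1a.ne'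
    have hsum : ∑ i ∈ Finset.range (n + 1),
          (lam (n + 1) / lam i) * ‖h' (x (i + 1)) + p (i + 1)‖ ^ 2
        = (1 + α n)⁻¹ * ∑ i ∈ Finset.range n,
            (lam n / lam i) * ‖h' (x (i + 1)) + p (i + 1)‖ ^ 2
          + (1 + α n)⁻¹ * ‖h' (x (n + 1)) + p (n + 1)‖ ^ 2 := by
      rw [Finset.sum_range_succ, Finset.mul_sum]
      congr 1
      · apply Finset.sum_congr rfl
        intro i _
        rw [hsucc]
        ring
      · rw [hsucc, mul_comm (lam n) (1 + α n)⁻¹, mul_div_assoc, div_self (hlampos n).ne',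
          mul_one]
    have hkey := key n
    have hE1 := mul_le_mul_of_nonneg_left hkey htpos.le
    have hexp : (1 + α n)⁻¹ * ((1 + α n) * (f (x (n + 1)) - f xstar
            + γ (n + 1) / 2 * ‖v (n + 1) - xstar‖ ^ 2)
          + 1 / (4 * L) * ‖h' (x (n + 1)) + p (n + 1)‖ ^ 2)
        = (f (x (n + 1)) - f xstar + γ (n + 1) / 2 * ‖v (n + 1) - xstar‖ ^ 2)
          + (1 + α n)⁻¹ * (1 / (4 * L) * ‖h' (x (n + 1)) + p (n + 1)‖ ^ 2) := by
      rw [mul_add, ← mul_assoc, ht1, one_mul]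
    have hih := mul_le_mul_of_nonneg_left ih htpos.le
    rw [hsum, hsucc]
    linarith [hE1, hexp, hih]
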